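/- Under the same setup, suppose 0 ≤ aᵀx̂ − b ≤ Σ_{j∈J'} αⱼ|x̂ⱼ|. Then the optimal value of the linear program min{ Σ_{j∈J'} wⱼ : 0 ≤ wⱼ ≤ 1, Σ_{j∈J'} αⱼ|x̂ⱼ| wⱼ = aᵀx̂ − b } equals the smallest Γ ∈ [0, |J'|] satisfying P(Γ) = aᵀx̂ − b, where P is the protection function defined by the sorted values w₁ ≥ w₂ ≥ … of {αⱼ|x̂ⱼ|} as P(Γ) = Σ_{k=1}^{⌊Γ⌋} w_k + (Γ − ⌊Γ⌋) w_{⌈Γ⌉}. -/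

import Mathlib

/-- The protection function P(Γ) of the cardinality constrained uncertainty set. -/
noncomputable def protFn (w : ℕ → ℝ) (Γ : ℝ) : ℝ :=
  (∑ k ∈ Finset.range ⌊Γ⌋₊, w k) + (Γ - (⌊Γ⌋₊ : ℝ)) * w ⌊Γ⌋₊

lemma protFn_mono (w : ℕ → ℝ) (hw0 : ∀ k, 0 ≤ w k)
    (hsort : ∀ k l, k ≤ l → w l ≤ w k) {x y : ℝ} (hy : 0 ≤ y) (hxy : x ≤ y) :
    protFn w x ≤ protFn w y := by
  set m := ⌊x⌋₊ with hm
  set M := ⌊y⌋₊ with hM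
  have hmM : m ≤ M := Nat.floor_mono hxy
  unfold protFn
  rcases eq_or_lt_of_le hmM with h | h
  · rw [← hm, ← hM, ← h]
    have : (x - m) * w m ≤ (y - m) * w m := by
      apply mul_le_mul_of_nonneg_right (by linarith) (hw0 m)
    linarith
  · have h1 : (x - m) * w m ≤ w m := by
      have hx1 : x < m + 1 := Nat.lt_floor_add_one x
      calc (x - m) * w m ≤ 1 * w m :=
            mul_le_mul_of_nonneg_right (by linarith) (hw0 m)
        _ = w m := one_mul _
    have h2 : (∑ k ∈ Finset.range m, w k) + w m = ∑ k ∈ Finset.range (m+1), w k :=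
      (Finset.sum_range_succ w m).symm
    have h3 : ∑ k ∈ Finset.range (m+1), w k ≤ ∑ k ∈ Finset.range M, w k := by
      apply Finset.sum_le_sum_of_subset_of_nonneg
      · exact Finset.range_subset_range.mpr h
      · intro i _ _; exact hw0 i
    have h4 : 0 ≤ (y - M) * w M := by
      have : (M : ℝ) ≤ y := Nat.floor_le hy
      exact mul_nonneg (by linarith) (hw0 M)
    linarith

/-- Greedy upper bound: for 0 ≤ v ≤ 1, `∑ w k * v k ≤ P(∑ v k)`. -/
lemma key_ineq (N : ℕ) (w : ℕ → ℝ) (hw0 : ∀ k, 0 ≤ w k)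
    (hsort : ∀ k l, k ≤ l → w l ≤ w k)
    (v : ℕ → ℝ) (hv : ∀ k < N, 0 ≤ v k ∧ v k ≤ 1) :
    ∑ k ∈ Finset.range N, w k * v k ≤ protFn w (∑ k ∈ Finset.range N, v k) := by
  set r := ∑ k ∈ Finset.range N, v k with hr
  have hr0 : 0 ≤ r := Finset.sum_nonneg fun k hk => (hv k (Finset.mem_range.mp hk)).1
  have hrN : r ≤ N := by
    calc r ≤ ∑ _k ∈ Finset.range N, (1 : ℝ) :=
          Finset.sum_le_sum fun k hk => (hv k (Finset.mem_range.mp hk)).2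
      _ = N := by simp
  set m := ⌊r⌋₊ with hm
  have hmN : m ≤ N := by
    have := Nat.floor_mono hrN
    simpa using this
  have hmr : (m : ℝ) ≤ r := Nat.floor_le hr0
  -- split sums at m
  have hsplit : ∀ f : ℕ → ℝ, ∑ k ∈ Finset.range N, f k
      = ∑ k ∈ Finset.range m, f k + ∑ k ∈ Finset.Ico m N, f k := by
    intro f
    rw [Finset.range_eq_Ico, Finset.range_eq_Ico]
    exact (Finset.sum_Ico_consecutive f (Nat.zero_le m) hmN).symm
  rw [hsplit (fun k => w k * v k)]
  have step1 : ∑ k ∈ Finset.Ico m N, w k * v k ≤ w m * ∑ k ∈ Finset.Ico m N, v k := by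
    rw [Finset.mul_sum]
    apply Finset.sum_le_sum
    intro k hk
    obtain ⟨hk1, hk2⟩ := Finset.mem_Ico.mp hk
    exact mul_le_mul_of_nonneg_right (hsort m k hk1) (hv k hk2).1
  have hIco : ∑ k ∈ Finset.Ico m N, v k = r - ∑ k ∈ Finset.range m, v k := by
    rw [hr, hsplit v]; ring
  have step2 : w m * ∑ k ∈ Finset.Ico m N, v k
      = (r - m) * w m + ∑ k ∈ Finset.range m, w m * (1 - v k) := by
    have expand : ∑ k ∈ Finset.range m, w m * (1 - v k)
        = (m : ℝ) * w m - w m * ∑ k ∈ Finset.range m, v k := by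
      have hc : ∀ k ∈ Finset.range m, w m * (1 - v k) = w m - w m * v k := by
        intro k _; ring
      rw [Finset.sum_congr rfl hc, Finset.sum_sub_distrib, Finset.sum_const,
        Finset.card_range, ← Finset.mul_sum, nsmul_eq_mul]
    rw [hIco, expand]
    ring
  have step3 : ∑ k ∈ Finset.range m, w m * (1 - v k)
      ≤ ∑ k ∈ Finset.range m, w k * (1 - v k) := by
    apply Finset.sum_le_sum
    intro k hk
    have hk' := Finset.mem_range.mp hk
    have hvk := hv k (lt_of_lt_of_le hk' hmN)
    exact mul_le_mul_of_nonneg_right (hsort k m (le_of_lt hk')) (by linarith [hvk.2])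
  have step4 : ∑ k ∈ Finset.range m, w k * v k + ∑ k ∈ Finset.range m, w k * (1 - v k)
      = ∑ k ∈ Finset.range m, w k := by
    rw [← Finset.sum_add_distrib]
    apply Finset.sum_congr rfl
    intro k _; ring
  unfold protFn
  rw [← hm]
  linarith

/-- Reindexing a sum over J' through the enumeration e. -/
lemma reindex {n : ℕ} (J' : Finset (Fin n)) (e : ℕ → Fin n)
    (he_mem : ∀ k < J'.card, e k ∈ J')
    (he_inj : ∀ k < J'.card, ∀ l < J'.card, e k = e l → k = l)
    (he_surj : ∀ j ∈ J', ∃ k < J'.card, e k = j)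
    (g : Fin n → ℝ) :
    ∑ k ∈ Finset.range J'.card, g (e k) = ∑ j ∈ J', g j := by
  apply Finset.sum_bij (fun k _ => e k)
  · intro a ha; exact he_mem a (Finset.mem_range.mp ha)
  · intro a ha b hb hab
    exact he_inj a (Finset.mem_range.mp ha) b (Finset.mem_range.mp hb) hab
  · intro j hj
    obtain ⟨k, hk, hek⟩ := he_surj j hj
    exact ⟨k, Finset.mem_range.mpr hk, hek⟩
  · intro a _; rfl

/-- The LP computing the critical budget Γ̲ equals the smallest Γ with
P(Γ) = aᵀxh − b. -/
theorem stmt_17 {n : ℕ} (xh a : Fin n → ℝ) (b : ℝ) (J' : Finset (Fin n))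
    (α : Fin n → ℝ) (hα : ∀ j, 0 ≤ α j)
    (w : ℕ → ℝ) (e : ℕ → Fin n)
    (he_mem : ∀ k < J'.card, e k ∈ J')
    (he_inj : ∀ k < J'.card, ∀ l < J'.card, e k = e l → k = l)
    (he_surj : ∀ j ∈ J', ∃ k < J'.card, e k = j)
    (hw_def : ∀ k < J'.card, w k = α (e k) * |xh (e k)|)
    (hw_zero : ∀ k, J'.card ≤ k → w k = 0)
    (hsort : ∀ k l, k ≤ l → w l ≤ w k)
    (hS0 : 0 ≤ (∑ j, a j * xh j) - b)
    (hS1 : (∑ j, a j * xh j) - b ≤ ∑ j ∈ J', α j * |xh j|)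
    (Γmin : ℝ)
    (hΓmin : IsLeast {Γ | Γ ∈ Set.Icc (0 : ℝ) (J'.card : ℝ) ∧
        protFn w Γ = (∑ j, a j * xh j) - b} Γmin) :
    IsLeast {r | ∃ φ : Fin n → ℝ, (∀ j ∈ J', 0 ≤ φ j ∧ φ j ≤ 1) ∧
        (∑ j ∈ J', α j * |xh j| * φ j = (∑ j, a j * xh j) - b) ∧
        r = ∑ j ∈ J', φ j} Γmin := by
  set N := J'.card with hN
  set S := (∑ j, a j * xh j) - b with hS
  obtain ⟨⟨⟨hΓ0, hΓN⟩, hΓP⟩, hΓleast⟩ := hΓmin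
  have hw0 : ∀ k, 0 ≤ w k := by
    intro k
    rcases le_or_gt N k with h | h
    · rw [hw_zero k h]
    · have := hsort k N (le_of_lt h)
      rw [hw_zero N le_rfl] at this
      linarith
  constructor
  · -- Γmin is achieved by the greedy φ
    set m := ⌊Γmin⌋₊ with hm
    set θ := Γmin - (m : ℝ) with hθ
    have hmΓ : (m : ℝ) ≤ Γmin := Nat.floor_le hΓ0
    have hθ0 : 0 ≤ θ := by simp [hθ]; linarith
    have hθ1 : θ ≤ 1 := by
      have := Nat.lt_floor_add_one Γmin
      simp only [hθ]; push_cast at this ⊢; linarith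
    have hmN : m ≤ N := by
      have := Nat.floor_mono hΓN
      simpa [hm] using this
    set v : ℕ → ℝ := fun k => if k < m then 1 else if k = m then θ else 0 with hv
    have hv01 : ∀ k, 0 ≤ v k ∧ v k ≤ 1 := by
      intro k
      simp only [hv]
      split_ifs <;> constructor <;> norm_num <;> linarith
    set φ : Fin n → ℝ := fun j => if h : j ∈ J' then v (Classical.choose (he_surj j h)) else 0
      with hφ
    have hφe : ∀ k < N, φ (e k) = v k := by
      intro k hk
      have hmem := he_mem k hk
      simp only [hφ, dif_pos hmem]
      have hspec := Classical.choose_spec (he_surj (e k) hmem)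
      obtain ⟨hk', hek'⟩ := hspec
      rw [he_inj _ hk' _ hk hek']
    refine ⟨φ, ?_, ?_, ?_⟩
    · intro j hj
      simp only [hφ, dif_pos hj]
      exact hv01 _
    · rw [← reindex J' e he_mem he_inj he_surj (fun j => α j * |xh j| * φ j)]
      have heq : ∑ k ∈ Finset.range N, α (e k) * |xh (e k)| * φ (e k)
          = ∑ k ∈ Finset.range N, w k * v k := by
        apply Finset.sum_congr rfl
        intro k hk
        have hk' := Finset.mem_range.mp hk
        rw [hw_def k hk', hφe k hk']
      rw [heq, ← hΓP]
      unfold protFn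
      rw [← hm, ← hθ]
      rcases eq_or_lt_of_le hmN with h | h
      · -- m = N : Γmin = N, θ = 0
        have hΓeq : Γmin = (N : ℝ) := le_antisymm hΓN (by
          have := hmΓ; rw [h] at this; exact this)
        have hθz : θ = 0 := by rw [hθ, hΓeq, h]; ring
        have hall : ∀ k ∈ Finset.range N, w k * v k = w k := by
          intro k hk
          have hk' := Finset.mem_range.mp hk
          have hkm : k < m := by omega
          simp [hv, hkm]
        rw [Finset.sum_congr rfl hall, hθz, ← h]
        ring
      · -- m < N
        have hsplit : ∑ k ∈ Finset.range N, w k * v k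
            = ∑ k ∈ Finset.range (m+1), w k * v k
              + ∑ k ∈ Finset.Ico (m+1) N, w k * v k := by
          rw [Finset.range_eq_Ico, Finset.range_eq_Ico]
          exact (Finset.sum_Ico_consecutive _ (Nat.zero_le (m+1)) h).symm
        have h2 : ∑ k ∈ Finset.Ico (m+1) N, w k * v k = 0 := by
          apply Finset.sum_eq_zero
          intro k hk
          obtain ⟨hk1, _⟩ := Finset.mem_Ico.mp hk
          have h1 : ¬ k < m := by omega
          have h2 : k ≠ m := by omega
          simp [hv, h1, h2]
        have h3 : ∑ k ∈ Finset.range (m+1), w k * v k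
            = ∑ k ∈ Finset.range m, w k + θ * w m := by
          rw [Finset.sum_range_succ]
          have : ∀ k ∈ Finset.range m, w k * v k = w k := by
            intro k hk
            simp [hv, Finset.mem_range.mp hk]
          rw [Finset.sum_congr rfl this]
          simp [hv]
          ring
        rw [hsplit, h2, h3]
        ring
    · rw [← reindex J' e he_mem he_inj he_surj φ]
      have heq : ∑ k ∈ Finset.range N, φ (e k) = ∑ k ∈ Finset.range N, v k := by
        apply Finset.sum_congr rfl
        intro k hk
        exact hφe k (Finset.mem_range.mp hk)
      rw [heq]
      rcases eq_or_lt_of_le hmN with h | h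
      · have hΓeq : Γmin = (N : ℝ) := le_antisymm hΓN (by
          have := hmΓ; rw [h] at this; exact this)
        have hall : ∀ k ∈ Finset.range N, v k = 1 := by
          intro k hk
          have hk' := Finset.mem_range.mp hk
          have hkm : k < m := by omega
          simp [hv, hkm]
        rw [Finset.sum_congr rfl hall]
        simp [hΓeq]
      · have hsplit : ∑ k ∈ Finset.range N, v k
            = ∑ k ∈ Finset.range (m+1), v k + ∑ k ∈ Finset.Ico (m+1) N, v k := by
          rw [Finset.range_eq_Ico, Finset.range_eq_Ico]
          exact (Finset.sum_Ico_consecutive _ (Nat.zero_le (m+1)) h).symm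
        have h2 : ∑ k ∈ Finset.Ico (m+1) N, v k = 0 := by
          apply Finset.sum_eq_zero
          intro k hk
          obtain ⟨hk1, _⟩ := Finset.mem_Ico.mp hk
          have ha : ¬ k < m := by omega
          have hb : k ≠ m := by omega
          simp [hv, ha, hb]
        have h3 : ∑ k ∈ Finset.range (m+1), v k = (m : ℝ) + θ := by
          rw [Finset.sum_range_succ]
          have : ∀ k ∈ Finset.range m, v k = 1 := by
            intro k hk
            simp [hv, Finset.mem_range.mp hk]
          rw [Finset.sum_congr rfl this]
          simp [hv]
        rw [hsplit, h2, h3]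
        simp [hθ]
  · -- lower bound
    rintro r ⟨φ, hφ01, hφS, rfl⟩
    by_contra hcon
    push_neg at hcon
    set r := ∑ j ∈ J', φ j with hr
    have hr0 : 0 ≤ r := Finset.sum_nonneg fun j hj => (hφ01 j hj).1
    have hrN : r ≤ (N : ℝ) := by
      calc r ≤ ∑ _j ∈ J', (1 : ℝ) := Finset.sum_le_sum fun j hj => (hφ01 j hj).2
        _ = N := by simp [hN]
    -- S ≤ P(r)
    have hkey : S ≤ protFn w r := by
      rw [← hφS]
      have e1 : ∑ j ∈ J', α j * |xh j| * φ j
          = ∑ k ∈ Finset.range N, w k * φ (e k) := by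
        rw [← reindex J' e he_mem he_inj he_surj (fun j => α j * |xh j| * φ j)]
        apply Finset.sum_congr rfl
        intro k hk
        rw [hw_def k (Finset.mem_range.mp hk)]
      have e2 : r = ∑ k ∈ Finset.range N, φ (e k) :=
        (reindex J' e he_mem he_inj he_surj φ).symm
      rw [e1, e2]
      exact key_ineq N w hw0 hsort (fun k => φ (e k))
        (fun k hk => hφ01 (e k) (he_mem k hk))
    have hmono : protFn w r ≤ protFn w Γmin :=
      protFn_mono w hw0 hsort (le_of_lt (lt_of_le_of_lt hr0 hcon)) (le_of_lt hcon)
    have hPr : protFn w r = S := le_antisymm (hΓP ▸ hmono) hkey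
    have : Γmin ≤ r := hΓleast ⟨⟨hr0, hrN⟩, hPr⟩
    linarith
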